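/- In the pruning process with parameter r > 0, for every excluded edge uv there is a path between u and v using only included edges of total length at most (1 + 1/r)·|uv|. -/

import Mathlib

/-- `IsEdgeChain ue ve a b l` : the list of edge indices `l` (edge `i` having endpoints
`ue i` and `ve i`) forms a chain of consecutively incident edges from `a` to `b`. -/
def IsEdgeChain {V : Type*} {n : ℕ} (ue ve : Fin n → V) : V → V → List (Fin n) → Prop
  | a, b, [] => a = b
  | a, b, i :: l =>
      (ue i = a ∧ IsEdgeChain ue ve (ve i) b l) ∨
      (ve i = a ∧ IsEdgeChain ue ve (ue i) b l)

lemma IsEdgeChain.append {V : Type*} {n : ℕ} {ue ve : Fin n → V} :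
    ∀ {l l' : List (Fin n)} {a b c : V},
      IsEdgeChain ue ve a b l → IsEdgeChain ue ve b c l' →
      IsEdgeChain ue ve a c (l ++ l')
  | [], l', a, b, c, h, h' => by
      simp only [IsEdgeChain] at h; subst h; simpa using h'
  | i :: l, l', a, b, c, h, h' => by
      simp only [IsEdgeChain] at h ⊢
      rcases h with ⟨h1, h2⟩ | ⟨h1, h2⟩
      · exact Or.inl ⟨h1, IsEdgeChain.append h2 h'⟩
      · exact Or.inr ⟨h1, IsEdgeChain.append h2 h'⟩

lemma IsEdgeChain.reverse {V : Type*} {n : ℕ} {ue ve : Fin n → V} :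
    ∀ {l : List (Fin n)} {a b : V},
      IsEdgeChain ue ve a b l → IsEdgeChain ue ve b a l.reverse
  | [], a, b, h => by simp only [IsEdgeChain] at h ⊢; exact h.symm
  | i :: l, a, b, h => by
      simp only [IsEdgeChain, List.reverse_cons] at h ⊢
      rcases h with ⟨h1, h2⟩ | ⟨h1, h2⟩
      · exact IsEdgeChain.append (IsEdgeChain.reverse h2)
          (Or.inr ⟨rfl, h1⟩)
      · exact IsEdgeChain.append (IsEdgeChain.reverse h2)
          (Or.inl ⟨rfl, h1⟩)

lemma replace_chain {V : Type*} {n : ℕ} {ue ve : Fin n → V}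
    (p : V → EuclideanSpace ℝ (Fin 2)) (inc : Fin n → Prop) (wgt : Fin n → ℝ) :
    ∀ (l : List (Fin n)) (a b : V),
      (∀ j ∈ l, ∃ m : List (Fin n), (∀ k ∈ m, inc k) ∧
        IsEdgeChain ue ve (ue j) (ve j) m ∧
        (m.map fun k => dist (p (ue k)) (p (ve k))).sum ≤ wgt j) →
      IsEdgeChain ue ve a b l →
      ∃ l' : List (Fin n), (∀ k ∈ l', inc k) ∧ IsEdgeChain ue ve a b l' ∧
        (l'.map fun k => dist (p (ue k)) (p (ve k))).sum ≤ (l.map wgt).sum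
  | [], a, b, _, h => ⟨[], by simp, h, by simp⟩
  | j :: l, a, b, hrep, h => by
      obtain ⟨m, hm1, hm2, hm3⟩ := hrep j List.mem_cons_self
      rcases h with ⟨h1, h2⟩ | ⟨h1, h2⟩
      · obtain ⟨l', hl1, hl2, hl3⟩ := replace_chain p inc wgt l (ve j) b
          (fun k hk => hrep k (List.mem_cons_of_mem _ hk)) h2
        refine ⟨m ++ l', ?_, ?_, ?_⟩
        · intro k hk; rcases List.mem_append.1 hk with hk | hk
          exacts [hm1 k hk, hl1 k hk]
        · exact IsEdgeChain.append (h1 ▸ hm2) hl2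
        · simp only [List.map_append, List.sum_append, List.map_cons, List.sum_cons]
          exact add_le_add hm3 hl3
      · obtain ⟨l', hl1, hl2, hl3⟩ := replace_chain p inc wgt l (ue j) b
          (fun k hk => hrep k (List.mem_cons_of_mem _ hk)) h2
        refine ⟨m.reverse ++ l', ?_, ?_, ?_⟩
        · intro k hk; rcases List.mem_append.1 hk with hk | hk
          exacts [hm1 k (List.mem_reverse.1 hk), hl1 k hk]
        · exact IsEdgeChain.append (h1 ▸ IsEdgeChain.reverse hm2) hl2
        · simp only [List.map_append, List.sum_append, List.map_reverse,
            List.sum_reverse, List.map_cons, List.sum_cons]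
          exact add_le_add hm3 hl3

/-- In the pruning process, edges are settled in order; an included edge has weight equal to
its Euclidean length, and an excluded edge `uv` has a boundary path of previously settled
edges from `u` to `v` whose total weight is at most `(1+1/r)·|uv|` and equals `weight(uv)`.
Then every excluded edge `uv` admits a path of included edges from `u` to `v` of total
Euclidean length at most `(1+1/r)·|uv|`. -/
theorem excluded_edge_face_path {V : Type*} (r : ℝ) (hr : 0 < r) (n : ℕ)
    (p : V → EuclideanSpace ℝ (Fin 2))
    (ue ve : Fin n → V) (inc : Fin n → Prop) (wgt : Fin n → ℝ)
    (hinc : ∀ i, inc i → wgt i = dist (p (ue i)) (p (ve i)))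
    (hexc : ∀ i, ¬inc i → ∃ l : List (Fin n),
      (∀ j ∈ l, (j : ℕ) < (i : ℕ)) ∧
      IsEdgeChain ue ve (ue i) (ve i) l ∧
      wgt i = (l.map wgt).sum ∧
      (l.map wgt).sum ≤ (1 + 1 / r) * dist (p (ue i)) (p (ve i))) :
    ∀ i, ¬inc i → ∃ l : List (Fin n), (∀ j ∈ l, inc j) ∧
      IsEdgeChain ue ve (ue i) (ve i) l ∧
      (l.map fun j => dist (p (ue j)) (p (ve j))).sum ≤
        (1 + 1 / r) * dist (p (ue i)) (p (ve i)) := by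
  -- strengthened statement: the included path has length at most `wgt i`
  have main : ∀ N : ℕ, ∀ i : Fin n, (i : ℕ) < N → ¬inc i →
      ∃ l : List (Fin n), (∀ j ∈ l, inc j) ∧
        IsEdgeChain ue ve (ue i) (ve i) l ∧
        (l.map fun j => dist (p (ue j)) (p (ve j))).sum ≤ wgt i := by
    intro N
    induction N with
    | zero => intro i hi; omega
    | succ N ih =>
      intro i hi hni
      obtain ⟨l, hlt, hch, heq, _⟩ := hexc i hni
      have hrep : ∀ j ∈ l, ∃ m : List (Fin n), (∀ k ∈ m, inc k) ∧
          IsEdgeChain ue ve (ue j) (ve j) m ∧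
          (m.map fun k => dist (p (ue k)) (p (ve k))).sum ≤ wgt j := by
        intro j hj
        by_cases hij : inc j
        · refine ⟨[j], by simpa using hij, Or.inl ⟨rfl, rfl⟩, ?_⟩
          simp [hinc j hij]
        · exact ih j (by have := hlt j hj; omega) hij
      obtain ⟨l', h1, h2, h3⟩ := replace_chain p inc wgt l (ue i) (ve i) hrep hch
      exact ⟨l', h1, h2, heq ▸ h3⟩
  intro i hni
  obtain ⟨l, h1, h2, h3⟩ := main n i i.isLt hni
  obtain ⟨m, _, _, hmeq, hmle⟩ := hexc i hni
  exact ⟨l, h1, h2, h3.trans (hmeq ▸ hmle)⟩
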